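/- (Theorem 1.) Let P ⊆ ℝ^{n₁} × ℝ^{n₂} be a compact convex set and let (x*, y*) be an extreme point of P. Let ŷ ∈ ℝ^{n₂} satisfy a⋅x* + b⋅ŷ ≥ f and q(ŷ) < q(y*). Define D₁(ŷ) = {(x,y) : a⋅x ≤ f − b⋅ŷ − 1} and D₂(ŷ) = {(x,y) : q(y) ≤ q(ŷ)}, and let D(ŷ) = conv((P ∩ D₁(ŷ)) ∪ (P ∩ D₂(ŷ))). Then there exist α ∈ ℝ^{n₁}, β ∈ ℝ^{n₂} and τ ∈ ℝ such that α⋅x + β⋅y ≥ τ for every (x,y) ∈ D(ŷ), while α⋅x* + β⋅y* < τ; i.e., there is a disjunctive cut separating (x*, y*) from D(ŷ). -/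

import Mathlib

/-- **Theorem 1.** Let `P ⊆ ℝ^{n₁} × ℝ^{n₂}` be a compact convex set and let
`(x*, y*)` be an extreme point of `P`. Let `ŷ` satisfy `a⋅x* + b⋅ŷ ≥ f` and
`q(ŷ) < q(y*)`, where `q(y) = ‖V y‖² + g⋅y`. Then there is a linear inequality
`α⋅x + β⋅y ≥ τ` valid for
`D(ŷ) = conv((P ∩ D₁(ŷ)) ∪ (P ∩ D₂(ŷ)))` and violated by `(x*, y*)`. -/
theorem stmt_4 {n₁ n₂ n₃ : ℕ} (a : Fin n₁ → ℝ) (b : Fin n₂ → ℝ) (f : ℝ)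
    (V : (Fin n₂ → ℝ) →ₗ[ℝ] EuclideanSpace ℝ (Fin n₃)) (g : Fin n₂ → ℝ)
    (q : (Fin n₂ → ℝ) → ℝ) (hq : ∀ y, q y = ‖V y‖ ^ 2 + ∑ i, g i * y i)
    (P : Set ((Fin n₁ → ℝ) × (Fin n₂ → ℝ)))
    (hPcomp : IsCompact P) (hPconv : Convex ℝ P)
    (xs : Fin n₁ → ℝ) (ys : Fin n₂ → ℝ)
    (hext : (xs, ys) ∈ Set.extremePoints ℝ P)
    (yhat : Fin n₂ → ℝ)
    (hfeas : ∑ i, a i * xs i + ∑ i, b i * yhat i ≥ f)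
    (hbetter : q yhat < q ys) :
    ∃ (α : Fin n₁ → ℝ) (β : Fin n₂ → ℝ) (τ : ℝ),
      (∀ p ∈ convexHull ℝ
          ((P ∩ {p : (Fin n₁ → ℝ) × (Fin n₂ → ℝ) |
              ∑ i, a i * p.1 i ≤ f - ∑ i, b i * yhat i - 1}) ∪
           (P ∩ {p : (Fin n₁ → ℝ) × (Fin n₂ → ℝ) | q p.2 ≤ q yhat})),
        ∑ i, α i * p.1 i + ∑ i, β i * p.2 i ≥ τ) ∧
      ∑ i, α i * xs i + ∑ i, β i * ys i < τ := by
  classical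
  set A : Set ((Fin n₁ → ℝ) × (Fin n₂ → ℝ)) :=
    P ∩ {p | ∑ i, a i * p.1 i ≤ f - ∑ i, b i * yhat i - 1} with hAdef
  set B : Set ((Fin n₁ → ℝ) × (Fin n₂ → ℝ)) :=
    P ∩ {p | q p.2 ≤ q yhat} with hBdef
  -- continuity facts
  have hcont1 : Continuous fun p : (Fin n₁ → ℝ) × (Fin n₂ → ℝ) => ∑ i, a i * p.1 i :=
    continuous_finset_sum _ fun i _ =>
      continuous_const.mul ((continuous_apply i).comp continuous_fst)
  have hqcont : Continuous q := by
    have hqe : q = fun y => ‖V y‖ ^ 2 + ∑ i, g i * y i := funext hq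
    rw [hqe]
    exact ((V.continuous_of_finiteDimensional.norm.pow 2).add
      (continuous_finset_sum _ fun i _ => continuous_const.mul (continuous_apply i)))
  -- convexity of q
  have hqconv : ConvexOn ℝ Set.univ q := by
    have hqe : q = fun y => ‖V y‖ ^ 2 + ∑ i, g i * y i := funext hq
    rw [hqe]
    have h1 : ConvexOn ℝ Set.univ fun x : EuclideanSpace ℝ (Fin n₃) => ‖x‖ ^ 2 := by
      refine ⟨convex_univ, fun x _ y _ c d hc hd hcd => ?_⟩
      have h1' : ‖c • x + d • y‖ ≤ c * ‖x‖ + d * ‖y‖ := by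
        refine (norm_add_le _ _).trans ?_
        rw [norm_smul, norm_smul, Real.norm_of_nonneg hc, Real.norm_of_nonneg hd]
      have h2' : ‖c • x + d • y‖ ^ 2 ≤ (c * ‖x‖ + d * ‖y‖) ^ 2 :=
        pow_le_pow_left₀ (norm_nonneg _) h1' 2
      have hx0 := norm_nonneg x
      have hy0 := norm_nonneg y
      simp only [smul_eq_mul]
      nlinarith [sq_nonneg (‖x‖ - ‖y‖), mul_nonneg hc hd]
    have h2 : ConvexOn ℝ Set.univ fun y : Fin n₂ → ℝ => ‖V y‖ ^ 2 := by
      have := h1.comp_linearMap V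
      exact this
    have h3 : ConvexOn ℝ Set.univ fun y : Fin n₂ → ℝ => ∑ i, g i * y i := by
      have := (∑ i, g i • LinearMap.proj i : (Fin n₂ → ℝ) →ₗ[ℝ] ℝ).convexOn convex_univ
      refine this.congr fun y _ => ?_
      simp [LinearMap.sum_apply]
    exact h2.add h3
  have hAconv : Convex ℝ A := by
    refine hPconv.inter ?_
    have hlin := (∑ i, a i • ((LinearMap.proj i).comp
      (LinearMap.fst ℝ (Fin n₁ → ℝ) (Fin n₂ → ℝ))) :
        ((Fin n₁ → ℝ) × (Fin n₂ → ℝ)) →ₗ[ℝ] ℝ).convexOn convex_univ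
    have := hlin.convex_le (f - ∑ i, b i * yhat i - 1)
    convert this using 1
    · rfl
    ext p
    simp [LinearMap.sum_apply]
  have hBconv : Convex ℝ B := by
    refine hPconv.inter ?_
    have := (hqconv.comp_linearMap
      (LinearMap.snd ℝ (Fin n₁ → ℝ) (Fin n₂ → ℝ))).convex_le (q yhat)
    convert this using 1
    · rfl
    ext p
    simp [LinearMap.snd_apply]
  have hAcomp : IsCompact A :=
    hPcomp.inter_right (isClosed_le hcont1 continuous_const)
  have hBcomp : IsCompact B :=
    hPcomp.inter_right (isClosed_le (hqcont.comp continuous_snd) continuous_const)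
  -- the convex hull of A ∪ B is closed
  have hclosed : IsClosed (convexHull ℝ (A ∪ B)) := by
    rcases Set.eq_empty_or_nonempty A with hA0 | hA0
    · rcases Set.eq_empty_or_nonempty B with hB0 | hB0
      · simp [hA0, hB0]
      · rw [hA0, Set.empty_union, hBconv.convexHull_eq]
        exact hBcomp.isClosed
    · rcases Set.eq_empty_or_nonempty B with hB0 | hB0
      · rw [hB0, Set.union_empty, hAconv.convexHull_eq]
        exact hAcomp.isClosed
      · rw [Convex.convexHull_union hAconv hBconv hA0 hB0]
        have himg : convexJoin ℝ A B =
            (fun z : ℝ × ((Fin n₁ → ℝ) × (Fin n₂ → ℝ)) × ((Fin n₁ → ℝ) × (Fin n₂ → ℝ)) =>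
              (1 - z.1) • z.2.1 + z.1 • z.2.2) '' (Set.Icc (0:ℝ) 1 ×ˢ A ×ˢ B) := by
          ext z
          simp only [mem_convexJoin, Set.mem_image, Set.mem_prod, Set.mem_Icc, segment_eq_image]
          constructor
          · rintro ⟨x, hx, y, hy, θ, hθ, rfl⟩
            exact ⟨(θ, x, y), ⟨hθ, hx, hy⟩, rfl⟩
          · rintro ⟨⟨θ, x, y⟩, ⟨hθ, hx, hy⟩, rfl⟩
            exact ⟨x, hx, y, hy, θ, hθ, rfl⟩
        rw [himg]
        exact ((isCompact_Icc.prod (hAcomp.prod hBcomp)).image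
          (by fun_prop)).isClosed
  -- (xs, ys) is not in the hull
  have hxnot : (xs, ys) ∉ convexHull ℝ (A ∪ B) := by
    have hsub : A ∪ B ⊆ P \ {(xs, ys)} := by
      rintro p (⟨hp, hp2⟩ | ⟨hp, hp2⟩) <;> refine ⟨hp, fun hpeq => ?_⟩ <;>
        simp only [Set.mem_singleton_iff] at hpeq <;> subst hpeq <;>
        simp only [Set.mem_setOf_eq] at hp2 <;> linarith
    have hconvdiff : Convex ℝ (P \ {(xs, ys)}) :=
      ((hPconv.mem_extremePoints_iff_convex_diff.1 hext)).2
    intro hmem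
    exact (convexHull_min hsub hconvdiff hmem).2 rfl
  obtain ⟨L, u, hLx, hLt⟩ :=
    geometric_hahn_banach_point_closed (convex_convexHull ℝ _) hclosed hxnot
  have key : ∀ p : (Fin n₁ → ℝ) × (Fin n₂ → ℝ),
      ∑ i, L ((Pi.single i 1 : Fin n₁ → ℝ), (0 : Fin n₂ → ℝ)) * p.1 i +
      ∑ i, L ((0 : Fin n₁ → ℝ), (Pi.single i 1 : Fin n₂ → ℝ)) * p.2 i = L p := by
    intro p
    have hp : p = (∑ i, p.1 i • ((Pi.single i 1 : Fin n₁ → ℝ), (0 : Fin n₂ → ℝ))) +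
        ∑ i, p.2 i • ((0 : Fin n₁ → ℝ), (Pi.single i 1 : Fin n₂ → ℝ)) := by
      apply Prod.ext
      · ext j
        simp [Prod.fst_sum, Prod.snd_sum, Finset.sum_apply, Pi.single_apply, mul_ite]
      · ext j
        simp [Prod.fst_sum, Prod.snd_sum, Finset.sum_apply, Pi.single_apply, mul_ite]
    conv_rhs => rw [hp]
    rw [map_add, map_sum, map_sum]
    simp only [map_smul, smul_eq_mul]
    ring_nf
    congr 1 <;> exact Finset.sum_congr rfl fun i _ => mul_comm _ _
  refine ⟨fun i => L ((Pi.single i 1 : Fin n₁ → ℝ), (0 : Fin n₂ → ℝ)),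
    fun i => L ((0 : Fin n₁ → ℝ), (Pi.single i 1 : Fin n₂ → ℝ)), u, fun p hp => ?_, ?_⟩
  · have := hLt p hp
    rw [key p]
    linarith
  · have := key (xs, ys)
    simp only at this
    rw [this]
    exact hLx
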